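/- For every n ∈ ℕ, ∫_ℝ ( x · h_{2n}'(x) + (1/2) h_{2n}(x) ) · h_{2n+2}(x) dx = -(1/2)√((2n+1)(2n+2)); that is, the matrix element ⟨(H + 1/2) h_{2n}, h_{2n+2}⟩ in L²(ℝ) of the operator H + 1/2 with H = x ∂_x equals -(1/2)√((2n+1)(2n+2)). -/

import Mathlib

open MeasureTheory Finset

/-- The normalized even Hermite function `h_{2n}`. -/
noncomputable def h2 (n : ℕ) (x : ℝ) : ℝ :=
  ∑ k ∈ Finset.range (n + 1),
    (-1 : ℝ) ^ (n - k) * (2 : ℝ) ^ ((3 * (k : ℝ)) - n + 1 / 4) *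
      Real.sqrt ((2 * n).factorial) / ((2 * k).factorial * (n - k).factorial) *
      Real.pi ^ k * x ^ (2 * k) * Real.exp (-Real.pi * x ^ 2)

open Real Polynomial Filter
open scoped Nat

lemma derivative_hermite' (n : ℕ) :
    derivative (hermite (n+1)) = ((n : Polynomial ℤ)+1) * hermite n := by
  induction n with
  | zero => simp [hermite_one, hermite_zero]
  | succ n ih =>
    rw [hermite_succ (n+1), derivative_sub, derivative_mul, derivative_X, ih,
      derivative_mul, hermite_succ n]
    have : derivative ((n : Polynomial ℤ)+1) = 0 := by
      simp [Polynomial.derivative_natCast]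
    rw [this]
    push_cast
    ring

noncomputable def cc : ℝ := 2 * Real.sqrt Real.pi

noncomputable def AA (m : ℕ) : ℝ := (2:ℝ)^((1:ℝ)/4) / Real.sqrt (m.factorial)

noncomputable def gg (x : ℝ) : ℝ := Real.exp (-Real.pi * x^2)

noncomputable def HP (m : ℕ) : Polynomial ℝ :=
  C (AA m) * ((hermite m).map (Int.castRingHom ℝ)).comp (C cc * X)

noncomputable def psi (m : ℕ) (x : ℝ) : ℝ := (HP m).eval x * gg x

noncomputable def DP (m : ℕ) : Polynomial ℝ :=
  derivative (HP m) - C (2*Real.pi) * X * HP m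

noncomputable def dpsi (m : ℕ) (x : ℝ) : ℝ := (DP m).eval x * gg x

lemma eval_HP (m : ℕ) (x : ℝ) :
    (HP m).eval x = AA m * ((hermite m).map (Int.castRingHom ℝ)).eval (cc * x) := by
  simp [HP]

lemma eval_dHP (m : ℕ) (x : ℝ) :
    (derivative (HP m)).eval x
      = AA m * cc * ((derivative (hermite m)).map (Int.castRingHom ℝ)).eval (cc * x) := by
  simp [HP, derivative_comp, derivative_map]
  ring

lemma hasDerivAt_psi (m : ℕ) (x : ℝ) : HasDerivAt (psi m) (dpsi m x) x := by
  have hg : HasDerivAt gg (-(2*Real.pi*x) * gg x) x := by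
    show HasDerivAt (fun x : ℝ => Real.exp (-Real.pi * x^2)) _ x
    have h : HasDerivAt (fun x : ℝ => -Real.pi * x^2) (-Real.pi * (2*x)) x := by
      simpa using ((hasDerivAt_pow 2 x).const_mul (-Real.pi))
    have := h.exp
    convert this using 1
    simp [gg]; ring
  have h := ((HP m).hasDerivAt x).mul hg
  have heq : dpsi m x = (derivative (HP m)).eval x * gg x + (HP m).eval x * (-(2*Real.pi*x) * gg x) := by
    simp [dpsi, DP]; ring
  rw [heq]
  exact h

lemma deriv_psi (m : ℕ) : deriv (psi m) = dpsi m :=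
  funext fun x => (hasDerivAt_psi m x).deriv

lemma gg_mul_gg (x : ℝ) : gg x * gg x = Real.exp (-(2*Real.pi) * x^2) := by
  rw [gg, ← Real.exp_add]; ring_nf

lemma integrable_poly_gauss (R : Polynomial ℝ) :
    Integrable fun x => R.eval x * Real.exp (-(2*Real.pi) * x^2) := by
  have h : ∀ i : ℕ, Integrable fun x : ℝ => R.coeff i * (x ^ i * Real.exp (-(2*Real.pi) * x^2)) := by
    intro i
    apply Integrable.const_mul
    have := integrable_rpow_mul_exp_neg_mul_sq (b := 2*Real.pi) (by positivity)
      (s := (i:ℝ)) (lt_of_lt_of_le neg_one_lt_zero (Nat.cast_nonneg i))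
    simpa [Real.rpow_natCast] using this
  have heq : (fun x => R.eval x * Real.exp (-(2*Real.pi) * x^2))
      = fun x => ∑ i ∈ Finset.range (R.natDegree + 1),
          R.coeff i * (x ^ i * Real.exp (-(2*Real.pi) * x^2)) := by
    funext x
    rw [Polynomial.eval_eq_sum_range, Finset.sum_mul]
    exact Finset.sum_congr rfl fun i _ => by ring
  rw [heq]
  exact integrable_finset_sum _ fun i _ => h i

lemma integrable_pg2 (P Q : Polynomial ℝ) :
    Integrable fun x => (P.eval x * gg x) * (Q.eval x * gg x) := by
  have := integrable_poly_gauss (P * Q)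
  apply this.congr
  filter_upwards with x
  rw [eval_mul, ← gg_mul_gg]; ring

lemma sqrtpi_pos : (0:ℝ) < Real.sqrt Real.pi := Real.sqrt_pos.mpr Real.pi_pos

lemma hss : Real.sqrt Real.pi * Real.sqrt Real.pi = Real.pi := Real.mul_self_sqrt Real.pi_pos.le

lemma hcc : cc = 2 * Real.sqrt Real.pi := rfl

lemma sqrt_succ_sq (m : ℕ) : Real.sqrt ((m:ℝ)+1) * Real.sqrt ((m:ℝ)+1) = (m:ℝ)+1 :=
  Real.mul_self_sqrt (by positivity)

lemma AA_succ (m : ℕ) : AA m = Real.sqrt ((m:ℝ)+1) * AA (m+1) := by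
  rw [AA, AA, Nat.factorial_succ]
  rw [show ((((m+1) * m.factorial : ℕ)) : ℝ) = ((m:ℝ)+1) * (m.factorial : ℝ) by push_cast; ring,
    Real.sqrt_mul (by positivity)]
  have h1 : Real.sqrt ((m:ℝ)+1) ≠ 0 := by positivity
  have h2 : Real.sqrt ((m.factorial : ℝ)) ≠ 0 := by
    have : (0:ℝ) < m.factorial := by exact_mod_cast m.factorial_pos
    positivity
  field_simp

lemma Asucc (m : ℕ) (x : ℝ) :
    dpsi (m+1) x + 2*Real.pi*x * psi (m+1) x
      = 2*Real.sqrt Real.pi * Real.sqrt ((m:ℝ)+1) * psi m x := by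
  have hd := eval_dHP (m+1) x
  rw [derivative_hermite'] at hd
  have hder : (((((m : Polynomial ℤ))+1) * hermite m).map (Int.castRingHom ℝ)).eval (cc*x)
      = ((m:ℝ)+1) * ((hermite m).map (Int.castRingHom ℝ)).eval (cc*x) := by
    simp
  rw [hder] at hd
  set E := ((hermite m).map (Int.castRingHom ℝ)).eval (cc*x) with hE
  set F := ((hermite (m+1)).map (Int.castRingHom ℝ)).eval (cc*x) with hF
  rw [dpsi, DP, eval_sub, hd]
  simp only [psi, eval_mul, eval_C, eval_X, eval_HP, ← hE, ← hF]
  rw [AA_succ m]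
  linear_combination (((m:ℝ)+1) * AA (m+1) * E * gg x) * hcc
    - (2 * Real.sqrt Real.pi * AA (m+1) * E * gg x) * (sqrt_succ_sq m)

lemma Adag (m : ℕ) (x : ℝ) :
    -dpsi m x + 2*Real.pi*x * psi m x
      = 2*Real.sqrt Real.pi * Real.sqrt ((m:ℝ)+1) * psi (m+1) x := by
  have hd := eval_dHP m x
  have hder : ((derivative (hermite m)).map (Int.castRingHom ℝ)).eval (cc*x)
      = cc * x * ((hermite m).map (Int.castRingHom ℝ)).eval (cc*x)
        - ((hermite (m+1)).map (Int.castRingHom ℝ)).eval (cc*x) := by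
    rw [hermite_succ]
    simp
  rw [hder] at hd
  set E := ((hermite m).map (Int.castRingHom ℝ)).eval (cc*x) with hE
  set F := ((hermite (m+1)).map (Int.castRingHom ℝ)).eval (cc*x) with hF
  rw [dpsi, DP, eval_sub, hd]
  simp only [psi, eval_mul, eval_C, eval_X, eval_HP, ← hE, ← hF]
  rw [AA_succ m]
  linear_combination (Real.sqrt ((m:ℝ)+1) * AA (m+1) * gg x * (F - (cc + 2*Real.sqrt Real.pi)*x*E)) * hcc
    - (4 * x * E * Real.sqrt ((m:ℝ)+1) * AA (m+1) * gg x) * hss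

lemma Azero (x : ℝ) :
    dpsi 0 x + 2*Real.pi*x * psi 0 x = 0 := by
  have hd := eval_dHP 0 x
  have h0 : derivative (hermite 0) = 0 := by rw [hermite_zero]; simp
  rw [h0] at hd
  simp only [Polynomial.map_zero, eval_zero, mul_zero] at hd
  rw [dpsi, DP, eval_sub, hd]
  simp only [psi, eval_mul, eval_C, eval_X, eval_HP]
  ring

lemma two_sqrtpi_ne : (2*Real.sqrt Real.pi) ≠ 0 := by positivity

lemma xrec (m : ℕ) (x : ℝ) :
    2*Real.sqrt Real.pi*x * psi (m+1) x
      = Real.sqrt ((m:ℝ)+1) * psi m x + Real.sqrt ((m:ℝ)+2) * psi (m+2) x := by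
  have e3 := Asucc m x
  have e4 := Adag (m+1) x
  push_cast at e4
  rw [show m+1+1 = m+2 from rfl, show ((m:ℝ)+1+1) = (m:ℝ)+2 by ring] at e4
  apply mul_left_cancel₀ two_sqrtpi_ne
  linear_combination e3 + e4 + (4*x*psi (m+1) x) * hss

lemma ladder (m : ℕ) (x : ℝ) :
    x * dpsi (m+2) x + psi (m+2) x / 2
      = (Real.sqrt ((m:ℝ)+2) * Real.sqrt ((m:ℝ)+1) * psi m x
         - Real.sqrt ((m:ℝ)+3) * Real.sqrt ((m:ℝ)+4) * psi (m+4) x) / 2 := by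
  have e1 := Asucc (m+1) x
  have e2 := Adag (m+2) x
  push_cast at e1 e2
  rw [show m+1+1 = m+2 from rfl, show ((m:ℝ)+1+1) = (m:ℝ)+2 by ring] at e1
  rw [show m+2+1 = m+3 from rfl, show ((m:ℝ)+2+1) = (m:ℝ)+3 by ring] at e2
  have r1 : dpsi (m+2) x = Real.sqrt Real.pi * (Real.sqrt ((m:ℝ)+2) * psi (m+1) x
      - Real.sqrt ((m:ℝ)+3) * psi (m+3) x) := by linarith
  have r2 := xrec m x
  have r3 := xrec (m+2) x
  push_cast at r3
  rw [show m+2+1 = m+3 from rfl, show m+2+2 = m+4 from rfl,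
    show ((m:ℝ)+2+1) = (m:ℝ)+3 by ring, show ((m:ℝ)+2+2) = (m:ℝ)+4 by ring] at r3
  have h2 := sqrt_succ_sq (m+1)
  have h3 := sqrt_succ_sq (m+2)
  push_cast at h2 h3
  rw [show ((m:ℝ)+1+1) = (m:ℝ)+2 by ring] at h2
  rw [show ((m:ℝ)+2+1) = (m:ℝ)+3 by ring] at h3
  apply mul_left_cancel₀ two_sqrtpi_ne
  linear_combination (2*Real.sqrt Real.pi*x) * r1
    + (Real.sqrt Real.pi * Real.sqrt ((m:ℝ)+2)) * r2
    - (Real.sqrt Real.pi * Real.sqrt ((m:ℝ)+3)) * r3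
    + (Real.sqrt Real.pi * psi (m+2) x) * h2 - (Real.sqrt Real.pi * psi (m+2) x) * h3

lemma ladder0 (x : ℝ) :
    x * dpsi 0 x + psi 0 x / 2 = -(Real.sqrt 2 * psi 2 x)/2 := by
  have e0 := Azero x
  have e0' := Adag 0 x
  norm_num [Real.sqrt_one] at e0'
  have r1 : dpsi 0 x = -(Real.sqrt Real.pi * psi 1 x) := by linarith
  have r2 := xrec 0 x
  norm_num [Real.sqrt_one] at r2
  apply mul_left_cancel₀ two_sqrtpi_ne
  linear_combination (2*Real.sqrt Real.pi*x) * r1 - Real.sqrt Real.pi * r2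

lemma integrable_psi_psi (m p : ℕ) : Integrable fun x => psi m x * psi p x := by
  simpa [psi] using integrable_pg2 (HP m) (HP p)

lemma integrable_dpsi_psi (m p : ℕ) : Integrable fun x => dpsi m x * psi p x := by
  simpa [dpsi, psi] using integrable_pg2 (DP m) (HP p)

lemma integrable_psi_dpsi (m p : ℕ) : Integrable fun x => psi m x * dpsi p x := by
  simpa [psi, dpsi] using integrable_pg2 (HP m) (DP p)

lemma integrable_x_psi_psi (m p : ℕ) : Integrable fun x => x * (psi m x * psi p x) := by
  have := integrable_pg2 (Polynomial.X * HP m) (HP p)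
  apply this.congr
  filter_upwards with x
  simp [psi]; ring

lemma ibp (m p : ℕ) : ∫ x : ℝ, psi m x * dpsi p x = - ∫ x : ℝ, dpsi m x * psi p x := by
  exact MeasureTheory.integral_mul_deriv_eq_deriv_mul_of_integrable
    (fun x _ => hasDerivAt_psi m x) (fun x _ => hasDerivAt_psi p x)
    (integrable_psi_dpsi m p) (integrable_dpsi_psi m p) (integrable_psi_psi m p)

lemma adjoint (m p : ℕ) :
    ∫ x : ℝ, (-dpsi m x + 2*Real.pi*x*psi m x) * psi p x
      = ∫ x : ℝ, psi m x * (dpsi p x + 2*Real.pi*x*psi p x) := by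
  have hL : ∀ x : ℝ, (-dpsi m x + 2*Real.pi*x*psi m x) * psi p x
      = -(dpsi m x * psi p x) + (2*Real.pi) * (x * (psi m x * psi p x)) := by
    intro x; ring
  have hR : ∀ x : ℝ, psi m x * (dpsi p x + 2*Real.pi*x*psi p x)
      = psi m x * dpsi p x + (2*Real.pi) * (x * (psi m x * psi p x)) := by
    intro x; ring
  simp only [hL, hR]
  have i1 : Integrable fun x : ℝ => -(dpsi m x * psi p x) := by
    exact (integrable_dpsi_psi m p).neg
  have i2 : Integrable fun x : ℝ => (2*Real.pi) * (x * (psi m x * psi p x)) := by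
    exact (integrable_x_psi_psi m p).const_mul _
  rw [integral_add i1 i2, integral_add (integrable_psi_dpsi m p) i2, integral_neg, ibp m p]

lemma step (m p : ℕ) :
    Real.sqrt ((m:ℝ)+1) * ∫ x : ℝ, psi (m+1) x * psi (p+1) x
      = Real.sqrt ((p:ℝ)+1) * ∫ x : ℝ, psi m x * psi p x := by
  apply mul_left_cancel₀ two_sqrtpi_ne
  rw [show (2*Real.sqrt Real.pi) * (Real.sqrt ((m:ℝ)+1) * ∫ x : ℝ, psi (m+1) x * psi (p+1) x)
      = ∫ x : ℝ, (2*Real.sqrt Real.pi * Real.sqrt ((m:ℝ)+1)) * (psi (m+1) x * psi (p+1) x) by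
    rw [integral_const_mul]; ring]
  have h1 : ∀ x : ℝ, (2*Real.sqrt Real.pi * Real.sqrt ((m:ℝ)+1)) * (psi (m+1) x * psi (p+1) x)
      = (-dpsi m x + 2*Real.pi*x*psi m x) * psi (p+1) x := by
    intro x
    rw [show (2*Real.sqrt Real.pi * Real.sqrt ((m:ℝ)+1)) * (psi (m+1) x * psi (p+1) x)
        = (2*Real.sqrt Real.pi * Real.sqrt ((m:ℝ)+1) * psi (m+1) x) * psi (p+1) x by ring,
      ← Adag m x]
  simp only [h1]
  rw [adjoint m (p+1)]
  have h2 : ∀ x : ℝ, psi m x * (dpsi (p+1) x + 2*Real.pi*x*psi (p+1) x)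
      = (2*Real.sqrt Real.pi * Real.sqrt ((p:ℝ)+1)) * (psi m x * psi p x) := by
    intro x
    rw [Asucc p x]; ring
  simp only [h2]
  rw [integral_const_mul]; ring

lemma zero0' (p : ℕ) : (∫ x : ℝ, psi (p+1) x * psi 0 x) = 0 := by
  have c_ne : (2*Real.sqrt Real.pi) * Real.sqrt ((p:ℝ)+1) ≠ 0 := by positivity
  apply mul_left_cancel₀ c_ne
  rw [mul_zero, ← MeasureTheory.integral_const_mul]
  have h1 : ∀ x : ℝ, (2*Real.sqrt Real.pi * Real.sqrt ((p:ℝ)+1)) * (psi (p+1) x * psi 0 x)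
      = (-dpsi p x + 2*Real.pi*x*psi p x) * psi 0 x := by
    intro x
    rw [show (2*Real.sqrt Real.pi * Real.sqrt ((p:ℝ)+1)) * (psi (p+1) x * psi 0 x)
        = (2*Real.sqrt Real.pi * Real.sqrt ((p:ℝ)+1) * psi (p+1) x) * psi 0 x by ring,
      ← Adag p x]
  simp only [h1]
  rw [adjoint p 0]
  have h2 : ∀ x : ℝ, psi p x * (dpsi 0 x + 2*Real.pi*x*psi 0 x) = 0 := by
    intro x
    rw [Azero x, mul_zero]
  simp only [h2, integral_zero]

lemma zero0 (p : ℕ) : (∫ x : ℝ, psi 0 x * psi (p+1) x) = 0 := by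
  rw [← zero0' p]
  congr 1
  funext x
  ring

lemma orth_base : (∫ x : ℝ, psi 0 x * psi 0 x) = 1 := by
  have hpt : ∀ x : ℝ, psi 0 x * psi 0 x
      = (2:ℝ)^((1:ℝ)/4) * (2:ℝ)^((1:ℝ)/4) * Real.exp (-(2*Real.pi) * x^2) := by
    intro x
    have h0 : (HP 0).eval x = (2:ℝ)^((1:ℝ)/4) := by
      rw [eval_HP, hermite_zero]
      simp [AA]
    rw [psi, h0, ← gg_mul_gg]
    ring
  simp only [hpt]
  rw [MeasureTheory.integral_const_mul, integral_gaussian]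
  rw [show Real.pi / (2*Real.pi) = 1/2 by field_simp]
  rw [← Real.rpow_add (by norm_num), show (1:ℝ)/4 + 1/4 = 1/2 by norm_num]
  rw [show ((2:ℝ))^((1:ℝ)/2) = Real.sqrt 2 by rw [Real.sqrt_eq_rpow]]
  rw [← Real.sqrt_mul (by norm_num)]
  norm_num

lemma orth (m : ℕ) : ∀ p : ℕ, (∫ x : ℝ, psi m x * psi p x) = if m = p then 1 else 0 := by
  induction m with
  | zero =>
    intro p
    cases p with
    | zero => simpa using orth_base
    | succ p => simp [zero0 p]
  | succ m ih =>
    intro p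
    cases p with
    | zero => simp [zero0' m]
    | succ p =>
      have hs : Real.sqrt ((m:ℝ)+1) ≠ 0 := by positivity
      apply mul_left_cancel₀ hs
      rw [step m p, ih p]
      by_cases h : m = p
      · subst h
        simp
      · have h' : ¬ (m+1 = p+1) := by omega
        simp [h, h']

lemma cc_sq : cc^2 = 4 * Real.pi := by
  rw [hcc]
  rw [show (2*Real.sqrt Real.pi)^2 = 4 * (Real.sqrt Real.pi * Real.sqrt Real.pi) by ring, hss]

lemma core_df (m : ℕ) : (2*m).factorial = 2^m * m.factorial * (2*m-1)‼ := by
  cases m with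
  | zero => rfl
  | succ m =>
    rw [show 2*(m+1) = (2*m+1)+1 by ring, Nat.factorial_eq_mul_doubleFactorial,
      show 2*m+1+1 = 2*(m+1) by ring, Nat.doubleFactorial_two_mul,
      show 2*(m+1)-1 = 2*m+1 by omega]

lemma sum_even (f : ℕ → ℝ) (h : ∀ j, f (2*j+1) = 0) (n : ℕ) :
    ∑ i ∈ Finset.range (2*n+1), f i = ∑ k ∈ Finset.range (n+1), f (2*k) := by
  induction n with
  | zero => simp
  | succ n ih =>
    rw [show 2*(n+1)+1 = (2*n+1)+1+1 by ring, Finset.sum_range_succ, Finset.sum_range_succ,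
      ih, h n, show (2*n+1)+1 = 2*(n+1) by ring]
    conv_rhs => rw [Finset.sum_range_succ]
    ring

lemma psi_even_sum (n : ℕ) (x : ℝ) :
    psi (2*n) x = ∑ k ∈ Finset.range (n+1),
      AA (2*n) * ((((hermite (2*n)).coeff (2*k) : ℤ) : ℝ)) * (cc*x)^(2*k) * gg x := by
  have hdeg : (((hermite (2*n)).map (Int.castRingHom ℝ))).natDegree < 2*n+1 := by
    have h1 : (((hermite (2*n)).map (Int.castRingHom ℝ))).natDegree ≤ (hermite (2*n)).natDegree :=
      Polynomial.natDegree_map_le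
    have h2 : (hermite (2*n)).natDegree = 2*n := natDegree_hermite
    omega
  rw [psi, eval_HP, Polynomial.eval_eq_sum_range' hdeg]
  simp only [Polynomial.coeff_map, eq_intCast, Finset.mul_sum, Finset.sum_mul]
  have step1 : ∑ i ∈ Finset.range (2*n+1),
      AA (2*n) * ((((hermite (2*n)).coeff i : ℤ):ℝ) * (cc*x)^i) * gg x
      = ∑ i ∈ Finset.range (2*n+1),
        AA (2*n) * ((((hermite (2*n)).coeff i : ℤ):ℝ)) * (cc*x)^i * gg x :=
    Finset.sum_congr rfl fun i _ => by ring
  have hodd : ∀ j, AA (2*n) * ((((hermite (2*n)).coeff (2*j+1) : ℤ):ℝ)) * (cc*x)^(2*j+1) * gg x = 0 := by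
    intro j
    rw [coeff_hermite_of_odd_add (by simp [Nat.odd_add_one, parity_simps])]
    simp
  rw [step1, sum_even _ hodd n]

lemma rpow_split (n k : ℕ) :
    (2:ℝ)^((3*(k : ℝ)) - n + 1/4) = (2:ℝ)^((1:ℝ)/4) * 2^(3*k) / 2^n := by
  have h1 : (3*(k : ℝ)) - n + 1/4 = 1/4 + ((3*k : ℕ):ℝ) - ((n:ℕ):ℝ) := by push_cast; ring
  rw [h1, Real.rpow_sub (by norm_num), Real.rpow_add (by norm_num),
    Real.rpow_natCast, Real.rpow_natCast]

lemma h2_eq_psi (n : ℕ) : h2 n = psi (2*n) := by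
  funext x
  rw [h2, psi_even_sum]
  apply Finset.sum_congr rfl
  intro k hk
  have hkn : k ≤ n := by
    have := Finset.mem_range.mp hk; omega
  obtain ⟨m, rfl⟩ := Nat.exists_eq_add_of_le hkn
  have hmk : k + m - k = m := by omega
  rw [hmk]
  have hco : ((((hermite (2*(k+m))).coeff (2*k) : ℤ)):ℝ)
      = (-1:ℝ)^m * ((2*m-1)‼ : ℝ) * (((2*(k+m)).choose (2*k)) : ℝ) := by
    rw [show 2*(k+m) = 2*m + 2*k by ring, coeff_hermite_explicit]
    push_cast
    ring
  rw [hco, AA]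
  have hx : (cc*x)^(2*k) = (4*Real.pi)^k * x^(2*k) := by
    rw [mul_pow, show cc^(2*k) = (cc^2)^k by rw [pow_mul], cc_sq]
  rw [hx, rpow_split (k+m) k]
  have hch := Nat.choose_mul_factorial_mul_factorial (show 2*k ≤ 2*(k+m) by omega)
  rw [show 2*(k+m)-2*k = 2*m by omega] at hch
  have hgg : Real.exp (-Real.pi * x ^ 2) = gg x := rfl
  rw [hgg]
  set F : ℝ := (((2*(k+m)).factorial : ℕ) : ℝ) with hFdef
  set Ch : ℝ := ((((2*(k+m)).choose (2*k)) : ℕ) : ℝ) with hChdef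
  set Dk : ℝ := (((2*k).factorial : ℕ) : ℝ) with hDkdef
  set Dm : ℝ := ((m.factorial : ℕ) : ℝ) with hDmdef
  set DD : ℝ := ((((2*m-1)‼ : ℕ)) : ℝ) with hDDdef
  set M2 : ℝ := (((2*m).factorial : ℕ) : ℝ) with hM2def
  have hchR : Ch * Dk * M2 = F := by
    rw [hChdef, hDkdef, hM2def, hFdef]; exact_mod_cast hch
  have hdfR : M2 = 2^m * Dm * DD := by
    rw [hM2def, hDmdef, hDDdef]
    exact_mod_cast core_df m
  have hFpos : (0:ℝ) < F := by rw [hFdef]; exact_mod_cast Nat.factorial_pos _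
  have hsF : Real.sqrt F * Real.sqrt F = F := Real.mul_self_sqrt hFpos.le
  have hF0 : Real.sqrt F ≠ 0 := by positivity
  have h2k0 : Dk ≠ 0 := by
    rw [hDkdef]; exact_mod_cast (Nat.factorial_pos _).ne'
  have hm0 : Dm ≠ 0 := by
    rw [hDmdef]; exact_mod_cast (Nat.factorial_pos _).ne'
  have h2pow : ((2:ℝ))^(k+m) ≠ 0 := by positivity
  rw [mul_pow 4 Real.pi k, show ((4:ℝ))^k = 2^k * 2^k by rw [← mul_pow]; norm_num]
  field_simp
  linear_combination (x^(2*k) * gg x * 2^(3*k)) * hsF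
    - (x^(2*k) * gg x * 2^(3*k)) * hchR
    + (x^(2*k) * gg x * 2^(3*k) * Ch * Dk) * hdfR

lemma key (j M : ℕ) (h : j ≠ M) (α β : ℝ) :
    ∫ x : ℝ, (α * psi j x - β * psi M x)/2 * psi M x = -(β/2) := by
  have hpt : ∀ x : ℝ, (α * psi j x - β * psi M x)/2 * psi M x
      = (α/2) * (psi j x * psi M x) - (β/2) * (psi M x * psi M x) := fun x => by ring
  simp only [hpt]
  rw [integral_sub ((integrable_psi_psi j M).const_mul _) ((integrable_psi_psi M M).const_mul _),
    MeasureTheory.integral_const_mul, MeasureTheory.integral_const_mul, orth j M, orth M M]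
  simp [h]

/-- the matrix element `⟨(H + 1/2) h_{2n}, h_{2n+2}⟩` of `H = x ∂_x`
equals `-(1/2)√((2n+1)(2n+2))`. -/
theorem stmt5 (n : ℕ) :
    (∫ x : ℝ, (x * deriv (h2 n) x + (1 / 2) * h2 n x) * h2 (n + 1) x)
      = -(1 / 2) * Real.sqrt ((2 * (n : ℝ) + 1) * (2 * (n : ℝ) + 2)) := by
  rw [h2_eq_psi n, h2_eq_psi (n+1)]
  simp only [deriv_psi]
  rcases n with _ | m
  · have hpt : ∀ x : ℝ, (x * dpsi (2*0) x + (1/2) * psi (2*0) x) * psi (2*(0+1)) x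
        = (0 * psi 0 x - Real.sqrt 2 * psi 2 x)/2 * psi 2 x := by
      intro x
      rw [show 2*0 = 0 from rfl, show 2*(0+1) = 2 from rfl]
      linear_combination (psi 2 x) * ladder0 x
    simp only [hpt]
    rw [key 0 2 (by omega) 0 (Real.sqrt 2)]
    norm_num
    rw [show (2:ℝ) = 1*2 by ring]
    ring
  · have hpt : ∀ x : ℝ, (x * dpsi (2*(m+1)) x + (1/2) * psi (2*(m+1)) x) * psi (2*(m+1+1)) x
        = ((Real.sqrt (2*(m:ℝ)+2) * Real.sqrt (2*(m:ℝ)+1)) * psi (2*m) x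
            - (Real.sqrt (2*(m:ℝ)+3) * Real.sqrt (2*(m:ℝ)+4)) * psi (2*m+4) x)/2 * psi (2*m+4) x := by
      intro x
      have hl := ladder (2*m) x
      push_cast at hl
      rw [show 2*(m+1) = 2*m+2 by ring, show 2*(m+1+1) = 2*m+4 by ring]
      linear_combination (psi (2*m+4) x) * hl
    simp only [hpt]
    rw [key (2*m) (2*m+4) (by omega) _ _]
    push_cast
    rw [show (2*((m:ℝ)+1)+1) * (2*((m:ℝ)+1)+2) = (2*(m:ℝ)+3) * (2*(m:ℝ)+4) by ring,
      Real.sqrt_mul (by positivity)]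
    ring
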